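/- Assume φ is strictly convex. Let t ∈ [0,1]^m and let M be a nonempty closed convex subset of [0,1]^m such that supp(s) ⊆ supp(t) for every s ∈ M. Then the φ-projection of t on M exists and is unique: there is exactly one s* ∈ M with D_φ(s*∣t) = inf_{s∈M} D_φ(s∣t). -/

import Mathlib

open Filter Topology

/-- The extended-real-valued integrand `f(v,w)` of a `φ`-divergence:
`f(v,w) = w·φ(v/w)` if `w > 0`, `f(v,0) = v·L` if `v > 0`, and `f(0,0) = 0`,
where `L = lim_{x→∞} φ(x)/x ∈ ℝ ∪ {∞}`. -/
noncomputable def phiF (φ : ℝ → ℝ) (L : EReal) (v w : ℝ) : EReal :=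
  if 0 < w then ((w * φ (v / w) : ℝ) : EReal)
  else if 0 < v then (v : EReal) * L
  else 0

/-- The `φ`-divergence `D_φ(s∣t) = Σ_{i=1}^m f(s_i, t_i)` of `s` relative to `t`. -/
noncomputable def Dphi (φ : ℝ → ℝ) (L : EReal) {m : ℕ} (s t : Fin m → ℝ) : EReal :=
  ∑ i, phiF φ L (s i) (t i)

/-- `p` is a `φ`-projection of `t` on `M`: `p ∈ M` and `D_φ(p∣t) = inf_{s ∈ M} D_φ(s∣t)`. -/
def IsPhiProj (φ : ℝ → ℝ) (L : EReal) {m : ℕ} (M : Set (Fin m → ℝ))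
    (t p : Fin m → ℝ) : Prop :=
  p ∈ M ∧ Dphi φ L p t = ⨅ s ∈ M, Dphi φ L s t

lemma coe_sum_eReal {n : ℕ} (f : Fin n → ℝ) :
    ((∑ i, f i : ℝ) : EReal) = ∑ i, ((f i : ℝ) : EReal) :=
  map_sum (⟨⟨(Real.toEReal), EReal.coe_zero⟩, fun x y => EReal.coe_add x y⟩ : ℝ →+ EReal)
    f Finset.univ

/-- if `φ` is strictly convex, `t ∈ [0,1]^m`, and `M ⊆ [0,1]^m` is a
nonempty closed convex set with `supp(s) ⊆ supp(t)` for every `s ∈ M`, then the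
`φ`-projection of `t` on `M` exists and is unique. -/
theorem statement4 (m : ℕ) (hm : 1 ≤ m) (φ : ℝ → ℝ) (L : EReal)
    (hφconv : ConvexOn ℝ (Set.Ici 0) φ)
    (hφ0 : ContinuousWithinAt φ (Set.Ici 0) 0)
    (hL : Tendsto (fun x : ℝ => ((φ x / x : ℝ) : EReal)) atTop (𝓝 L))
    (hφsc : StrictConvexOn ℝ (Set.Ici (0 : ℝ)) φ)
    (t : Fin m → ℝ) (ht : ∀ i, t i ∈ Set.Icc (0 : ℝ) 1)
    (M : Set (Fin m → ℝ)) (hMne : M.Nonempty) (hMcl : IsClosed M)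
    (hMconv : Convex ℝ M)
    (hMsub : ∀ s ∈ M, ∀ i, s i ∈ Set.Icc (0 : ℝ) 1)
    (hsupp : ∀ s ∈ M, ∀ i, 0 < s i → 0 < t i) :
    ∃! p, IsPhiProj φ L M t p := by
  classical
  -- φ is continuous on [0, ∞)
  have hφcont : ContinuousOn φ (Set.Ici 0) := by
    intro x hx
    rcases eq_or_lt_of_le (Set.mem_Ici.mp hx) with h | h
    · rw [← h]; exact hφ0
    · have hint := hφconv.continuousOn_interior
      rw [interior_Ici] at hint
      exact ((hint x h).continuousAt (Ioi_mem_nhds h)).continuousWithinAt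
  -- the real-valued objective
  set g : (Fin m → ℝ) → ℝ :=
    fun s => ∑ i, if 0 < t i then t i * φ (s i / t i) else 0 with hg
  -- on M, Dphi coincides with g
  have key : ∀ s ∈ M, Dphi φ L s t = ((g s : ℝ) : EReal) := by
    intro s hs
    have hz : ∀ i, phiF φ L (s i) (t i)
        = (((if 0 < t i then t i * φ (s i / t i) else 0 : ℝ)) : EReal) := by
      intro i
      by_cases h : 0 < t i
      · simp [phiF, h]
      · have hs0 : s i = 0 := by
          rcases (hMsub s hs i).1.eq_or_lt with h' | h'
          · exact h'.symm
          · exact absurd (hsupp s hs i h') h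
        simp [phiF, h, hs0]
    rw [Dphi, hg, coe_sum_eReal]
    exact Finset.sum_congr rfl fun i _ => hz i
  -- the box and compactness of M
  set B : Set (Fin m → ℝ) := Set.pi Set.univ (fun _ => Set.Icc (0:ℝ) 1) with hB
  have hMB : M ⊆ B := fun s hs i _ => hMsub s hs i
  have hBcomp : IsCompact B := isCompact_univ_pi fun _ => isCompact_Icc
  have hMcomp : IsCompact M := hBcomp.of_isClosed_subset hMcl hMB
  -- continuity of g on B
  have hgcont : ContinuousOn g B := by
    apply continuousOn_finset_sum
    intro i _
    by_cases h : 0 < t i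
    · simp only [if_pos h]
      have h1 : ContinuousOn (fun s : Fin m → ℝ => s i / t i) B :=
        ((continuous_apply i).continuousOn).div_const _
      have h2 : Set.MapsTo (fun s : Fin m → ℝ => s i / t i) B (Set.Ici 0) :=
        fun x hx => div_nonneg (hx i (Set.mem_univ i)).1 h.le
      exact continuousOn_const.mul (hφcont.comp h1 h2)
    · simp only [if_neg h]; exact continuousOn_const
  -- existence of a minimizer
  obtain ⟨p, hpM, hpmin⟩ := hMcomp.exists_isMinOn hMne (hgcont.mono hMB)
  have hpmin' : ∀ s ∈ M, g p ≤ g s := fun s hs => hpmin hs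
  -- uniqueness of minimizers via strict convexity
  have key_uniq : ∀ q ∈ M, (∀ s ∈ M, g q ≤ g s) → q = p := by
    intro q hqM hqmin
    by_contra hne
    obtain ⟨i0, hi0⟩ : ∃ i, q i ≠ p i := by
      by_contra h; push_neg at h; exact hne (funext h)
    have ht0 : 0 < t i0 := by
      by_contra h
      have hq0 : q i0 = 0 := by
        rcases (hMsub q hqM i0).1.eq_or_lt with h' | h'
        · exact h'.symm
        · exact absurd (hsupp q hqM i0 h') h
      have hp0 : p i0 = 0 := by
        rcases (hMsub p hpM i0).1.eq_or_lt with h' | h'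
        · exact h'.symm
        · exact absurd (hsupp p hpM i0 h') h
      exact hi0 (hq0.trans hp0.symm)
    set r : Fin m → ℝ := (1/2 : ℝ) • q + (1/2 : ℝ) • p with hr
    have hrM : r ∈ M := hMconv hqM hpM (by norm_num) (by norm_num) (by norm_num)
    have hri : ∀ i, r i = (q i + p i) / 2 := by
      intro i; simp [hr]; ring
    have hlt : g r < (g q + g p) / 2 := by
      have hsum : (g q + g p) / 2 = ∑ i,
          ((if 0 < t i then t i * φ (q i / t i) else 0)
            + (if 0 < t i then t i * φ (p i / t i) else 0)) / 2 := by
        rw [hg, ← Finset.sum_div, ← Finset.sum_add_distrib]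
      rw [hsum, hg]
      apply Finset.sum_lt_sum
      · intro i _
        by_cases h : 0 < t i
        · simp only [if_pos h]
          have hx : q i / t i ∈ Set.Ici (0:ℝ) := div_nonneg (hMsub q hqM i).1 h.le
          have hy : p i / t i ∈ Set.Ici (0:ℝ) := div_nonneg (hMsub p hpM i).1 h.le
          have hc := hφconv.2 hx hy (by norm_num : (0:ℝ) ≤ 1/2)
            (by norm_num : (0:ℝ) ≤ 1/2) (by norm_num)
          simp only [smul_eq_mul] at hc
          have harg : r i / t i = (1/2) * (q i / t i) + (1/2) * (p i / t i) := by
            rw [hri]; ring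
          rw [harg]
          nlinarith [hc, h.le]
        · simp [h]
      · refine ⟨i0, Finset.mem_univ i0, ?_⟩
        simp only [if_pos ht0]
        have hx : q i0 / t i0 ∈ Set.Ici (0:ℝ) := div_nonneg (hMsub q hqM i0).1 ht0.le
        have hy : p i0 / t i0 ∈ Set.Ici (0:ℝ) := div_nonneg (hMsub p hpM i0).1 ht0.le
        have hxy : q i0 / t i0 ≠ p i0 / t i0 :=
          fun hEq => hi0 (by field_simp at hEq; exact hEq)
        have hc := hφsc.2 hx hy hxy (by norm_num : (0:ℝ) < 1/2)
          (by norm_num : (0:ℝ) < 1/2) (by norm_num)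
        simp only [smul_eq_mul] at hc
        have harg : r i0 / t i0 = (1/2) * (q i0 / t i0) + (1/2) * (p i0 / t i0) := by
          rw [hri]; ring
        rw [harg]
        nlinarith [hc, ht0]
    have h1 : g q ≤ g r := hqmin r hrM
    have h2 : g p ≤ g r := hpmin' r hrM
    linarith
  -- the infimum is attained at p
  have hinf : (⨅ s ∈ M, Dphi φ L s t) = Dphi φ L p t := by
    refine le_antisymm (iInf₂_le p hpM) (le_iInf₂ fun s hs => ?_)
    rw [key s hs, key p hpM]
    exact EReal.coe_le_coe_iff.2 (hpmin' s hs)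
  refine ⟨p, ⟨hpM, hinf.symm⟩, ?_⟩
  rintro q ⟨hqM, hq⟩
  have hgqp : g q = g p := by
    have : ((g q : ℝ) : EReal) = ((g p : ℝ) : EReal) := by
      rw [← key q hqM, ← key p hpM, hq, hinf]
    exact_mod_cast this
  exact key_uniq q hqM fun s hs => hgqp ▸ hpmin' s hs
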